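/- arXiv:0810.4758 — 2 statements merged into one kernel-verified Lean document; each statement's English description precedes it below -/
import Mathlib

section
/- Let λ ∈ ℚ^n be dominant and regular and let w ∈ S_n. Then the intersection of the set { w·λ + ∑_{α∈I} α : I ⊆ Φ⁺ } with the orbit { w'λ : w' ∈ S_n } is exactly the singleton { wλ }. (This is the first equality of Lemma 3(i): ({w·λ} + P) ∩ Wλ = {wλ}.) -/
open Finset

/-- The positive root `ε_i − ε_j` (for `i < j`) of `gl_n`, as a vector in `ℚ^n`. -/
def posRoot {n : ℕ} (i j : Fin n) : Fin n → ℚ :=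
  fun k => (if k = i then 1 else 0) - (if k = j then 1 else 0)

/-- The set `Φ⁺ = { ε_i − ε_j : i < j }` of positive roots of `gl_n`. -/
def PosRoots (n : ℕ) : Finset (Fin n → ℚ) :=
  ((Finset.univ : Finset (Fin n × Fin n)).filter (fun p => p.1 < p.2)).image
    (fun p => posRoot p.1 p.2)

/-- The action of `S_n` on weights by permuting coordinates: `(wλ)_i = λ_{w⁻¹ i}`. -/
def wAct {n : ℕ} (w : Equiv.Perm (Fin n)) (v : Fin n → ℚ) : Fin n → ℚ :=
  fun i => v (w⁻¹ i)

/-- `ρ = (1/2) ∑_{α ∈ Φ⁺} α`. -/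
def rho (n : ℕ) : Fin n → ℚ := (1 / 2 : ℚ) • ∑ α ∈ PosRoots n, α

/-- The dot action `w·λ = w(λ+ρ) − ρ`. -/
def dotAct {n : ℕ} (w : Equiv.Perm (Fin n)) (lam : Fin n → ℚ) : Fin n → ℚ :=
  wAct w (lam + rho n) - rho n

/-- A weight is integral if all of its coordinates are integers. -/
def Integral {n : ℕ} (lam : Fin n → ℚ) : Prop := ∀ i, ∃ m : ℤ, lam i = (m : ℚ)

/-- A weight is dominant if it is integral and `λ_i − λ_{i+1} ≥ 0` for all consecutive `i`. -/
def Dominant {n : ℕ} (lam : Fin n → ℚ) : Prop :=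
  Integral lam ∧ ∀ i j : Fin n, (i : ℕ) + 1 = (j : ℕ) → 0 ≤ lam i - lam j

/-- A weight is regular if `λ_i − λ_j` is a nonzero integer for all `i ≠ j`. -/
def Regular {n : ℕ} (lam : Fin n → ℚ) : Prop :=
  ∀ i j : Fin n, i ≠ j → ∃ m : ℤ, m ≠ 0 ∧ lam i - lam j = (m : ℚ)

namespace Lemma3Aux

variable {n : ℕ}

lemma posRoot_apply (u v k : Fin n) :
    posRoot u v k = (if k = u then (1:ℚ) else 0) - (if k = v then 1 else 0) := rfl

lemma posRoot_inj {u v u' v' : Fin n} (h : u < v) (h' : u' < v')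
    (e : posRoot u v = posRoot u' v') : u = u' ∧ v = v' := by
  have hne : u ≠ v := ne_of_lt h
  have hne' : v ≠ u := (ne_of_lt h).symm
  have hu := congrFun e u
  have hv := congrFun e v
  rw [posRoot_apply, posRoot_apply, if_pos rfl, if_neg hne] at hu
  rw [posRoot_apply, posRoot_apply, if_neg hne', if_pos rfl] at hv
  constructor
  · by_cases h1 : u = u'
    · exact h1
    · exfalso
      rw [if_neg h1] at hu
      split_ifs at hu <;> norm_num at hu
  · by_cases h1 : v = v'
    · exact h1
    · exfalso
      rw [if_neg h1] at hv
      split_ifs at hv <;> norm_num at hv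

lemma injOn_posRoot {S : Finset (Fin n × Fin n)} (hS : ∀ q ∈ S, q.1 < q.2) :
    ∀ q ∈ S, ∀ q' ∈ S, posRoot q.1 q.2 = posRoot q'.1 q'.2 → q = q' := by
  intro q hq q' hq' e
  obtain ⟨h1, h2⟩ := posRoot_inj (hS q hq) (hS q' hq') e
  exact Prod.ext h1 h2

lemma card_filter_lt_fin (t : Fin n) :
    (univ.filter fun v : Fin n => v < t).card = (t : ℕ) := by
  have h : (univ.filter fun v : Fin n => v < t) = Finset.Iio t := by
    ext v; simp
  rw [h, Fin.card_Iio]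

lemma card_filter_perm_lt (σ : Equiv.Perm (Fin n)) (t : Fin n) :
    (univ.filter fun v : Fin n => σ v < t).card = (t : ℕ) := by
  rw [← card_filter_lt_fin t]
  apply Finset.card_bij' (fun v _ => σ v) (fun u _ => σ⁻¹ u)
  · intro v hv; simp only [mem_filter, mem_univ, true_and] at hv ⊢; exact hv
  · intro u hu; simp only [mem_filter, mem_univ, true_and] at hu ⊢; simpa using hu
  · intro v _; simp
  · intro u _; simp

lemma card_split (i : Fin n) (p : Fin n → Prop) [DecidablePred p] (hpi : ¬ p i) :
    (univ.filter p).card =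
      (univ.filter fun v => v < i ∧ p v).card + (univ.filter fun v => i < v ∧ p v).card := by
  rw [← Finset.card_union_of_disjoint]
  · congr 1
    ext v
    simp only [mem_union, mem_filter, mem_univ, true_and]
    constructor
    · intro hv
      rcases lt_trichotomy v i with h | h | h
      · exact Or.inl ⟨h, hv⟩
      · exact absurd (h ▸ hv) hpi
      · exact Or.inr ⟨h, hv⟩
    · rintro (⟨_, hv⟩ | ⟨_, hv⟩) <;> exact hv
  · simp only [Finset.disjoint_left, mem_filter, mem_univ, true_and]
    rintro v ⟨h1, _⟩ ⟨h2, _⟩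
    exact absurd (h1.trans h2) (lt_irrefl v)

lemma card_pairs_fst (i : Fin n) (C : Fin n × Fin n → Prop) [DecidablePred C] :
    (univ.filter fun q : Fin n × Fin n => q.1 = i ∧ C q).card
      = (univ.filter fun v : Fin n => C (i, v)).card := by
  have himg : (univ.filter fun v : Fin n => C (i, v))
      = (univ.filter fun q : Fin n × Fin n => q.1 = i ∧ C q).image Prod.snd := by
    ext v
    simp only [mem_image, mem_filter, mem_univ, true_and]
    constructor
    · intro hv; exact ⟨(i, v), ⟨rfl, hv⟩, rfl⟩
    · rintro ⟨q, ⟨h1, h2⟩, rfl⟩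
      have hq : q = (i, q.2) := Prod.ext h1 rfl
      rwa [hq] at h2
  rw [himg, Finset.card_image_of_injOn]
  intro q hq q' hq' h
  simp only [coe_filter, mem_univ, true_and, Set.mem_setOf_eq] at hq hq'
  exact Prod.ext (hq.1.trans hq'.1.symm) h

lemma card_pairs_snd (i : Fin n) (C : Fin n × Fin n → Prop) [DecidablePred C] :
    (univ.filter fun q : Fin n × Fin n => q.2 = i ∧ C q).card
      = (univ.filter fun v : Fin n => C (v, i)).card := by
  have himg : (univ.filter fun v : Fin n => C (v, i))
      = (univ.filter fun q : Fin n × Fin n => q.2 = i ∧ C q).image Prod.fst := by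
    ext v
    simp only [mem_image, mem_filter, mem_univ, true_and]
    constructor
    · intro hv; exact ⟨(v, i), ⟨rfl, hv⟩, rfl⟩
    · rintro ⟨q, ⟨h1, h2⟩, rfl⟩
      have hq : q = (q.1, i) := Prod.ext rfl h1
      rwa [hq] at h2
  rw [himg, Finset.card_image_of_injOn]
  intro q hq q' hq' h
  simp only [coe_filter, mem_univ, true_and, Set.mem_setOf_eq] at hq hq'
  exact Prod.ext h (hq.1.trans hq'.1.symm)

lemma sum_pairs_apply (J : Finset (Fin n × Fin n)) (i : Fin n) :
    (∑ q ∈ J, posRoot q.1 q.2) i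
      = ((J.filter fun q => q.1 = i).card : ℚ) - ((J.filter fun q => q.2 = i).card : ℚ) := by
  rw [Finset.sum_apply]
  simp only [posRoot_apply]
  rw [Finset.sum_sub_distrib]
  have e1 : J.filter (fun q => i = q.1) = J.filter fun q => q.1 = i :=
    Finset.filter_congr (fun q _ => by simp [eq_comm])
  have e2 : J.filter (fun q => i = q.2) = J.filter fun q => q.2 = i :=
    Finset.filter_congr (fun q _ => by simp [eq_comm])
  rw [Finset.sum_boole, Finset.sum_boole, e1, e2]

lemma exists_J {I : Finset (Fin n → ℚ)} (hI : I ⊆ PosRoots n) :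
    ∃ J : Finset (Fin n × Fin n), (∀ q ∈ J, q.1 < q.2) ∧
      ∑ α ∈ I, α = ∑ q ∈ J, posRoot q.1 q.2 := by
  refine ⟨univ.filter fun q : Fin n × Fin n => q.1 < q.2 ∧ posRoot q.1 q.2 ∈ I, ?_, ?_⟩
  · intro q hq; exact (mem_filter.mp hq).2.1
  · have hEq : I = (univ.filter fun q : Fin n × Fin n =>
        q.1 < q.2 ∧ posRoot q.1 q.2 ∈ I).image (fun q => posRoot q.1 q.2) := by
      ext α
      simp only [mem_image, mem_filter, mem_univ, true_and]
      constructor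
      · intro hα
        have hmem := hI hα
        simp only [PosRoots, mem_image, mem_filter, mem_univ, true_and] at hmem
        obtain ⟨q, hq, rfl⟩ := hmem
        exact ⟨q, ⟨hq, hα⟩, rfl⟩
      · rintro ⟨q, ⟨_, hq⟩, rfl⟩; exact hq
    nth_rewrite 1 [hEq]
    exact Finset.sum_image (injOn_posRoot (fun q hq => (mem_filter.mp hq).2.1))

lemma sum_posRoots_apply (k : Fin n) :
    (∑ α ∈ PosRoots n, α) k = ((univ.filter fun v : Fin n => k < v).card : ℚ)
      - ((univ.filter fun v : Fin n => v < k).card : ℚ) := by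
  have h1 : PosRoots n = ((univ : Finset (Fin n × Fin n)).filter
      (fun q => q.1 < q.2)).image (fun q => posRoot q.1 q.2) := rfl
  rw [h1, Finset.sum_image (injOn_posRoot (fun q hq => (mem_filter.mp hq).2)),
    sum_pairs_apply]
  congr 2
  · have h2 : ((univ.filter fun q : Fin n × Fin n => q.1 < q.2).filter fun q => q.1 = k)
        = univ.filter (fun q : Fin n × Fin n => q.1 = k ∧ q.1 < q.2) := by
      ext q; simp only [mem_filter, mem_univ, true_and]; tauto
    rw [h2, card_pairs_fst k (fun q => q.1 < q.2)]
  · have h2 : ((univ.filter fun q : Fin n × Fin n => q.1 < q.2).filter fun q => q.2 = k)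
        = univ.filter (fun q : Fin n × Fin n => q.2 = k ∧ q.1 < q.2) := by
      ext q; simp only [mem_filter, mem_univ, true_and]; tauto
    rw [h2, card_pairs_snd k (fun q => q.1 < q.2)]

lemma card_filter_gt' (k : Fin n) :
    (univ.filter fun v : Fin n => k < v).card + ((k : ℕ) + 1) = n := by
  have h := Finset.card_filter_add_card_filter_not
    (s := (univ : Finset (Fin n))) (p := fun v => k < v)
  have h2 : (univ.filter fun v : Fin n => ¬ k < v) = Finset.Iic k := by
    ext v; simp [not_lt]
  rw [h2, Fin.card_Iic] at h
  simpa using h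

lemma rho_sub (x y : Fin n) : rho n x - rho n y = (y : ℕ) - (x : ℕ) := by
  have hx := card_filter_gt' x
  have hy := card_filter_gt' y
  have hx' : ((univ.filter fun v : Fin n => x < v).card : ℚ) = (n : ℚ) - (x : ℕ) - 1 := by
    have := congrArg (fun m : ℕ => (m : ℚ)) hx
    push_cast at this
    linarith
  have hy' : ((univ.filter fun v : Fin n => y < v).card : ℚ) = (n : ℚ) - (y : ℕ) - 1 := by
    have := congrArg (fun m : ℕ => (m : ℚ)) hy
    push_cast at this
    linarith
  simp only [rho, Pi.smul_apply, smul_eq_mul]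
  rw [sum_posRoots_apply, sum_posRoots_apply, card_filter_lt_fin, card_filter_lt_fin, hx', hy']
  ring

lemma dotAct_apply (w : Equiv.Perm (Fin n)) (lam : Fin n → ℚ) (i : Fin n) :
    dotAct w lam i = lam (w⁻¹ i) + (((i : ℕ) : ℚ) - ((w⁻¹ i : Fin n) : ℕ)) := by
  have h := rho_sub (w⁻¹ i) i
  simp only [dotAct, wAct, Pi.sub_apply, Pi.add_apply]
  linarith

lemma strict_anti {lam : Fin n → ℚ} (hdom : Dominant lam) (hreg : Regular lam) :
    ∀ i j : Fin n, i < j → lam j < lam i := by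
  have mono : ∀ k : ℕ, ∀ i j : Fin n, (j : ℕ) = (i : ℕ) + k → lam j ≤ lam i := by
    intro k
    induction k with
    | zero =>
      intro i j h
      have : i = j := Fin.ext (by omega)
      rw [this]
    | succ k ih =>
      intro i j h
      have hlt : (i : ℕ) + k < n := by have := j.isLt; omega
      have h1 : lam (⟨(i : ℕ) + k, hlt⟩ : Fin n) ≤ lam i := ih i _ rfl
      have h2 : 0 ≤ lam (⟨(i : ℕ) + k, hlt⟩ : Fin n) - lam j := hdom.2 _ j (by simp; omega)
      linarith
  intro i j hij
  have hle : lam j ≤ lam i := mono ((j : ℕ) - (i : ℕ)) i j (by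
    have : (i : ℕ) < (j : ℕ) := hij
    omega)
  obtain ⟨m, hm0, hm⟩ := hreg i j (ne_of_lt hij)
  rcases hle.lt_or_eq with h | h
  · exact h
  · exfalso
    apply hm0
    have : (m : ℚ) = 0 := by rw [← hm, h]; ring
    exact_mod_cast this


lemma core (lam : Fin n → ℚ) (hs : ∀ i j : Fin n, i < j → lam j < lam i)
    (a b : Equiv.Perm (Fin n)) (J : Finset (Fin n × Fin n)) (hJ : ∀ q ∈ J, q.1 < q.2)
    (heq : ∀ i : Fin n, lam (a i) - lam (b i) =
      (((i : ℕ) : ℚ) - ((b i : ℕ) : ℚ)) + ((J.filter fun q => q.1 = i).card : ℚ)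
        - ((J.filter fun q => q.2 = i).card : ℚ)) :
    ∀ i, a i = b i := by
  suffices H : ∀ r : ℕ,
      (∀ i, (b i : ℕ) < r → a i = b i) ∧
      (∀ q ∈ J, ((b q.1 : ℕ) < r → (b q.2 : ℕ) < r)) ∧
      (∀ t u : Fin n, (b t : ℕ) < r → u < t → ¬ ((b u : ℕ) < r) → (u, t) ∈ J) by
    intro i
    exact (H n).1 i (b i).isLt
  intro r
  induction r with
  | zero =>
    exact ⟨fun i h => absurd h (Nat.not_lt_zero _),
      fun q hq h => absurd h (Nat.not_lt_zero _),
      fun t u h => absurd h (Nat.not_lt_zero _)⟩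
  | succ r ih =>
    obtain ⟨ih1, ih2, ih3⟩ := ih
    by_cases hrn : r < n
    · set rr : Fin n := ⟨r, hrn⟩ with hrrdef
      set s : Fin n := b.symm rr with hsdef
      have hbs : b s = rr := b.apply_symm_apply rr
      have hbsr : ¬ ((b s : ℕ) < r) := by rw [hbs]; simp [hrrdef]
      set m2 := (univ.filter fun v : Fin n => s < v ∧ (b v : ℕ) < r).card with hm2def
      set m1 := (univ.filter fun v : Fin n => v < s ∧ (b v : ℕ) < r).card with hm1def
      set u1 := (univ.filter fun v : Fin n => v < s ∧ ¬ ((b v : ℕ) < r)).card with hu1def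
      set outs := (J.filter fun q => q.1 = s).card with houtsdef
      set ins := (J.filter fun q => q.2 = s).card with hinsdef
      have f2 : m1 + m2 = r := by
        have hsplit := card_split s (fun v => (b v : ℕ) < r) hbsr
        have hcnt : (univ.filter fun v : Fin n => (b v : ℕ) < r).card = r := by
          have he : (univ.filter fun v : Fin n => (b v : ℕ) < r)
              = (univ.filter fun v : Fin n => b v < rr) :=
            Finset.filter_congr (fun v _ => by simp [Fin.lt_def, hrrdef])
          rw [he, card_filter_perm_lt b rr]
        rw [hcnt] at hsplit
        beta_reduce at hsplit
        omega
      have f1 : m1 + u1 = (s : ℕ) := by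
        have h := Finset.card_filter_add_card_filter_not
          (s := univ.filter fun v : Fin n => v < s) (p := fun v => (b v : ℕ) < r)
        rw [Finset.filter_filter, Finset.filter_filter, card_filter_lt_fin] at h
        exact h
      have f3 : ins ≤ u1 := by
        apply Finset.card_le_card_of_injOn Prod.fst
        · intro q hq
          simp only [mem_coe, mem_filter, mem_univ, true_and] at hq ⊢
          obtain ⟨hqJ, hq2⟩ := hq
          refine ⟨by rw [← hq2]; exact hJ q hqJ, ?_⟩
          intro hb1
          have hb2 := ih2 q hqJ hb1
          rw [hq2] at hb2
          exact hbsr hb2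
        · intro q hq q' hq' h
          simp only [coe_filter, Set.mem_setOf_eq] at hq hq'
          exact Prod.ext h (hq.2.trans hq'.2.symm)
      have f4 : m2 ≤ outs := by
        apply Finset.card_le_card_of_injOn (fun v => ((s, v) : Fin n × Fin n))
        · intro v hv
          simp only [mem_coe, mem_filter, mem_univ, true_and] at hv
          exact mem_filter.mpr ⟨ih3 v s hv.2 hv.1 hbsr, rfl⟩
        · intro v _ v' _ h
          exact (Prod.mk.injEq _ _ _ _).mp h |>.2
      have hes := heq s
      have has_ge : r ≤ (a s : ℕ) := by
        by_contra hlt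
        push_neg at hlt
        have hbt : b (b.symm (a s)) = a s := b.apply_symm_apply _
        have h1 : a (b.symm (a s)) = b (b.symm (a s)) := ih1 _ (by rw [hbt]; exact hlt)
        rw [hbt] at h1
        have h2 : b.symm (a s) = s := a.injective h1
        rw [h2, hbs] at hbt
        have : (a s : ℕ) = r := by rw [← hbt]
        omega
      have hq1 : ((m2 : ℚ)) ≤ (outs : ℚ) := by exact_mod_cast f4
      have hq2 : ((ins : ℚ)) ≤ (u1 : ℚ) := by exact_mod_cast f3
      have hq3 : ((m1 : ℚ)) + u1 = ((s : ℕ) : ℚ) := by exact_mod_cast f1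
      have hq4 : ((m1 : ℚ)) + m2 = (r : ℚ) := by exact_mod_cast f2
      have hbsv : ((b s : ℕ) : ℚ) = (r : ℚ) := by rw [hbs]
      rw [hbsv] at hes
      have hlam_ge : lam rr ≤ lam (a s) := by
        have : lam (a s) - lam (b s) ≥ 0 := by rw [hes]; linarith
        rw [hbs] at this
        linarith
      have has_eq : a s = rr := by
        rcases eq_or_lt_of_le has_ge with h | h
        · exact Fin.ext h.symm
        · exfalso
          have : rr < a s := by rw [Fin.lt_def]; exact h
          exact absurd (hs rr (a s) this) (not_lt.mpr hlam_ge)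
      have hzero : lam (a s) - lam (b s) = 0 := by rw [has_eq, hbs, sub_self]
      rw [hzero] at hes
      have houts_eq : outs = m2 := by
        have : (outs : ℚ) = (m2 : ℚ) := by linarith
        exact_mod_cast this
      have hins_eq : ins = u1 := by
        have : (ins : ℚ) = (u1 : ℚ) := by linarith
        exact_mod_cast this
      have E1 : ∀ q ∈ J, q.1 = s → (b q.2 : ℕ) < r := by
        have himg : (univ.filter fun v : Fin n => s < v ∧ (b v : ℕ) < r).image
            (fun v => ((s, v) : Fin n × Fin n)) = J.filter fun q => q.1 = s := by
          apply Finset.eq_of_subset_of_card_le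
          · intro q' hq'
            simp only [mem_image, mem_filter, mem_univ, true_and] at hq'
            obtain ⟨v, ⟨hv1, hv2⟩, rfl⟩ := hq'
            exact mem_filter.mpr ⟨ih3 v s hv2 hv1 hbsr, rfl⟩
          · rw [Finset.card_image_of_injOn (fun v _ v' _ h =>
              ((Prod.mk.injEq _ _ _ _).mp h).2)]
            rw [← houtsdef, ← hm2def, houts_eq]
        intro q hqJ hq1
        have hmem : q ∈ (univ.filter fun v : Fin n => s < v ∧ (b v : ℕ) < r).image
            (fun v => ((s, v) : Fin n × Fin n)) := by
          rw [himg]; exact mem_filter.mpr ⟨hqJ, hq1⟩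
        obtain ⟨v, hv, hqv⟩ := mem_image.mp hmem
        simp only [mem_filter, mem_univ, true_and] at hv
        rw [← hqv]
        exact hv.2
      have E2 : ∀ u : Fin n, u < s → ¬ ((b u : ℕ) < r) → (u, s) ∈ J := by
        have himg : (J.filter fun q => q.2 = s).image Prod.fst
            = univ.filter fun v : Fin n => v < s ∧ ¬ ((b v : ℕ) < r) := by
          apply Finset.eq_of_subset_of_card_le
          · intro x hx
            simp only [mem_image, mem_filter] at hx
            obtain ⟨q, ⟨hqJ, hq2⟩, rfl⟩ := hx
            simp only [mem_filter, mem_univ, true_and]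
            refine ⟨by rw [← hq2]; exact hJ q hqJ, ?_⟩
            intro hb1
            have hb2 := ih2 q hqJ hb1
            rw [hq2] at hb2
            exact hbsr hb2
          · rw [Finset.card_image_of_injOn (fun q hq q' hq' h => by
              simp only [coe_filter, Set.mem_setOf_eq] at hq hq'
              exact Prod.ext h (hq.2.trans hq'.2.symm))]
            rw [← hu1def, ← hinsdef, hins_eq]
        intro u hus hur
        have hmem : u ∈ (J.filter fun q => q.2 = s).image Prod.fst := by
          rw [himg]
          simp only [mem_filter, mem_univ, true_and]
          exact ⟨hus, hur⟩
        obtain ⟨q, hq, hqu⟩ := mem_image.mp hmem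
        simp only [mem_filter] at hq
        have hq' : q = (u, s) := Prod.ext hqu hq.2
        rw [← hq']
        exact hq.1
      refine ⟨?_, ?_, ?_⟩
      · intro i hi
        rcases Nat.lt_succ_iff_lt_or_eq.mp hi with h | h
        · exact ih1 i h
        · have hbi : b i = rr := Fin.ext h
          have his : i = s := b.injective (by rw [hbi, hbs])
          rw [his, hbs, has_eq]
      · intro q hqJ h1
        rcases Nat.lt_succ_iff_lt_or_eq.mp h1 with h | h
        · exact Nat.lt_succ_of_lt (ih2 q hqJ h)
        · have hbq : b q.1 = rr := Fin.ext h
          have hq1 : q.1 = s := b.injective (hbq.trans hbs.symm)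
          exact Nat.lt_succ_of_lt (E1 q hqJ hq1)
      · intro t u ht hut hu
        have hur : ¬ ((b u : ℕ) < r) := fun h => hu (Nat.lt_succ_of_lt h)
        rcases Nat.lt_succ_iff_lt_or_eq.mp ht with h | h
        · exact ih3 t u h hut hur
        · have hbt : b t = rr := Fin.ext h
          have hts : t = s := b.injective (hbt.trans hbs.symm)
          rw [hts]
          exact E2 u (hts ▸ hut) hur
    · have hb : ∀ i : Fin n, (b i : ℕ) < r :=
        fun i => lt_of_lt_of_le (b i).isLt (le_of_not_gt hrn)
      exact ⟨fun i _ => ih1 i (hb i), fun q _ _ => Nat.lt_succ_of_lt (hb q.2),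
        fun t u _ hut hu => absurd (Nat.lt_succ_of_lt (hb u)) hu⟩

end Lemma3Aux

/-- Lemma 3(i), first equality: for dominant regular `lam` and `w` in `S_n`,
the intersection of `{w·lam} + P` with the orbit `W lam` is exactly `{w lam}`. -/
theorem lemma3_i_first {n : ℕ} (hn : 1 ≤ n) (lam : Fin n → ℚ)
    (hdom : Dominant lam) (hreg : Regular lam) (w : Equiv.Perm (Fin n)) :
    {v : Fin n → ℚ | ∃ I ⊆ PosRoots n, v = dotAct w lam + ∑ α ∈ I, α} ∩
      {v : Fin n → ℚ | ∃ w' : Equiv.Perm (Fin n), v = wAct w' lam} =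
    {wAct w lam} := by
  have sdec := Lemma3Aux.strict_anti hdom hreg
  ext v
  simp only [Set.mem_inter_iff, Set.mem_setOf_eq, Set.mem_singleton_iff]
  constructor
  · rintro ⟨⟨I, hI, hv1⟩, ⟨w', hv2⟩⟩
    obtain ⟨J, hJlt, hJsum⟩ := Lemma3Aux.exists_J hI
    have heq : ∀ i : Fin n, lam (w'⁻¹ i) - lam (w⁻¹ i) =
        (((i : ℕ) : ℚ) - (((w⁻¹ i : Fin n) : ℕ) : ℚ))
          + ((J.filter fun q => q.1 = i).card : ℚ)
          - ((J.filter fun q => q.2 = i).card : ℚ) := by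
      intro i
      have h := congrFun (hv2.symm.trans hv1) i
      rw [Pi.add_apply, Lemma3Aux.dotAct_apply, hJsum, Lemma3Aux.sum_pairs_apply] at h
      have hw : wAct w' lam i = lam (w'⁻¹ i) := rfl
      rw [hw] at h
      linarith
    have hab := Lemma3Aux.core lam sdec w'⁻¹ w⁻¹ J hJlt heq
    rw [hv2]
    funext i
    show lam (w'⁻¹ i) = lam (w⁻¹ i)
    rw [hab i]
  · rintro rfl
    refine ⟨?_, ⟨w, rfl⟩⟩
    refine ⟨(univ.filter fun q : Fin n × Fin n => q.1 < q.2 ∧ w⁻¹ q.2 < w⁻¹ q.1).image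
      (fun q => posRoot q.1 q.2), ?_, ?_⟩
    · intro α hα
      simp only [mem_image, mem_filter, mem_univ, true_and] at hα
      obtain ⟨q, ⟨h1, _⟩, rfl⟩ := hα
      simp only [PosRoots, mem_image, mem_filter, mem_univ, true_and]
      exact ⟨q, h1, rfl⟩
    · funext i
      show lam (w⁻¹ i) = (dotAct w lam + _) i
      rw [Pi.add_apply, Lemma3Aux.dotAct_apply,
        Finset.sum_image (Lemma3Aux.injOn_posRoot (fun q hq => (mem_filter.mp hq).2.1)),
        Lemma3Aux.sum_pairs_apply]
      have hout : (((univ.filter fun q : Fin n × Fin n => q.1 < q.2 ∧ w⁻¹ q.2 < w⁻¹ q.1).filter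
          fun q => q.1 = i).card)
          = (univ.filter fun v : Fin n => i < v ∧ w⁻¹ v < w⁻¹ i).card := by
        have e : ((univ.filter fun q : Fin n × Fin n => q.1 < q.2 ∧ w⁻¹ q.2 < w⁻¹ q.1).filter
            fun q => q.1 = i)
            = univ.filter fun q : Fin n × Fin n => q.1 = i ∧ (q.1 < q.2 ∧ w⁻¹ q.2 < w⁻¹ q.1) := by
          ext q; simp only [mem_filter, mem_univ, true_and]; tauto
        rw [e, Lemma3Aux.card_pairs_fst i (fun q => q.1 < q.2 ∧ w⁻¹ q.2 < w⁻¹ q.1)]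
      have hin : (((univ.filter fun q : Fin n × Fin n => q.1 < q.2 ∧ w⁻¹ q.2 < w⁻¹ q.1).filter
          fun q => q.2 = i).card)
          = (univ.filter fun v : Fin n => v < i ∧ w⁻¹ i < w⁻¹ v).card := by
        have e : ((univ.filter fun q : Fin n × Fin n => q.1 < q.2 ∧ w⁻¹ q.2 < w⁻¹ q.1).filter
            fun q => q.2 = i)
            = univ.filter fun q : Fin n × Fin n => q.2 = i ∧ (q.1 < q.2 ∧ w⁻¹ q.2 < w⁻¹ q.1) := by
          ext q; simp only [mem_filter, mem_univ, true_and]; tauto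
        rw [e, Lemma3Aux.card_pairs_snd i (fun q => q.1 < q.2 ∧ w⁻¹ q.2 < w⁻¹ q.1)]
      rw [hout, hin]
      have hA : (univ.filter fun v : Fin n => w⁻¹ v < w⁻¹ i).card = ((w⁻¹ i : Fin n) : ℕ) :=
        Lemma3Aux.card_filter_perm_lt w⁻¹ (w⁻¹ i)
      have hsplitA := Lemma3Aux.card_split i (fun v => w⁻¹ v < w⁻¹ i) (lt_irrefl (w⁻¹ i))
      beta_reduce at hsplitA
      rw [hA] at hsplitA
      have hsplitI := Finset.card_filter_add_card_filter_not
        (s := univ.filter fun v : Fin n => v < i) (p := fun v => w⁻¹ v < w⁻¹ i)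
      rw [Finset.filter_filter, Finset.filter_filter, Lemma3Aux.card_filter_lt_fin] at hsplitI
      beta_reduce at hsplitI
      have hneg : (univ.filter fun v : Fin n => v < i ∧ ¬ w⁻¹ v < w⁻¹ i)
          = univ.filter fun v : Fin n => v < i ∧ w⁻¹ i < w⁻¹ v := by
        apply Finset.filter_congr
        intro v _
        constructor
        · rintro ⟨h1, h2⟩
          refine ⟨h1, lt_of_le_of_ne (not_lt.mp h2) (fun hvu => ?_)⟩
          exact absurd ((w⁻¹ : Equiv.Perm (Fin n)).injective hvu) (ne_of_lt h1).symm
        · rintro ⟨h1, h2⟩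
          exact ⟨h1, not_lt.mpr (le_of_lt h2)⟩
      rw [hneg] at hsplitI
      have hc1 : ((univ.filter fun v : Fin n => v < i ∧ w⁻¹ v < w⁻¹ i).card : ℚ)
          + ((univ.filter fun v : Fin n => i < v ∧ w⁻¹ v < w⁻¹ i).card : ℚ)
          = (((w⁻¹ i : Fin n) : ℕ) : ℚ) := by exact_mod_cast congrArg (fun m : ℕ => (m : ℚ)) hsplitA.symm
      have hc2 : ((univ.filter fun v : Fin n => v < i ∧ w⁻¹ v < w⁻¹ i).card : ℚ)
          + ((univ.filter fun v : Fin n => v < i ∧ w⁻¹ i < w⁻¹ v).card : ℚ)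
          = ((i : ℕ) : ℚ) := by exact_mod_cast congrArg (fun m : ℕ => (m : ℚ)) hsplitI
      linarith
end

section
/- Let λ ∈ ℚ^n be dominant and regular and let w ∈ S_n. Then the intersection of the set { wλ − ∑_{α∈I} α : I ⊆ Φ⁺ } with the dot-orbit { w'·λ : w' ∈ S_n } is exactly the singleton { w·λ }. (This is the second equality of Lemma 3(i): ({wλ} − P) ∩ W·λ = {w·λ}.) -/
open Finset

def Pr {n : ℕ} (p : Fin n × Fin n) : Fin n → ℚ := posRoot p.1 p.2
def Pairs (n : ℕ) : Finset (Fin n × Fin n) :=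
  (Finset.univ : Finset (Fin n × Fin n)).filter (fun p => p.1 < p.2)
lemma Pr_apply {n : ℕ} (p : Fin n × Fin n) (k : Fin n) :
    Pr p k = (if k = p.1 then 1 else 0) - (if k = p.2 then 1 else 0) := rfl
lemma Pr_injOn {n : ℕ} : Set.InjOn (Pr (n := n)) (Pairs n) := by
  intro p hp q hq h
  simp only [Pairs, coe_filter, Set.mem_setOf_eq, mem_univ, true_and] at hp hq
  have h1 := congrFun h p.1
  have h2 := congrFun h p.2
  simp only [Pr_apply, if_pos rfl] at h1 h2
  rw [if_neg (Fin.ne_of_lt hp)] at h1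
  rw [if_neg (Fin.ne_of_gt hp)] at h2
  have : p.1 = q.1 ∧ p.2 = q.2 := by
    split_ifs at h1 h2 <;>
      first
      | exact ⟨by assumption, by assumption⟩
      | (exfalso; subst_vars; first | exact absurd hq (lt_irrefl _) | linarith
         )
  exact Prod.ext this.1 this.2

-- new stuff
lemma sum_PosRoots (n : ℕ) : ∑ α ∈ PosRoots n, α = ∑ p ∈ Pairs n, Pr p := by
  rw [show PosRoots n = (Pairs n).image Pr from rfl]
  exact Finset.sum_image (fun x hx y hy h => Pr_injOn hx hy h)
lemma card_filter_lt_fst {n : ℕ} (k : Fin n) :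
    #((Pairs n).filter fun p => k = p.1) = n - 1 - k.val := by
  have : ((Pairs n).filter fun p => k = p.1) = (Finset.Ioi k).image (fun j => (k, j)) := by
    ext p
    simp only [Pairs, mem_filter, filter_filter, mem_univ, true_and, mem_image, mem_Ioi]
    constructor
    · rintro ⟨h1, h2⟩; exact ⟨p.2, h2 ▸ h1, by rw [h2]⟩
    · rintro ⟨j, hj, rfl⟩; exact ⟨hj, rfl⟩
  rw [this, Finset.card_image_of_injective _ (fun a b h => (Prod.mk.injEq _ _ _ _).mp h |>.2),
    Fin.card_Ioi]
lemma card_filter_lt_snd {n : ℕ} (k : Fin n) :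
    #((Pairs n).filter fun p => k = p.2) = k.val := by
  have : ((Pairs n).filter fun p => k = p.2) = (Finset.Iio k).image (fun i => (i, k)) := by
    ext p
    simp only [Pairs, mem_filter, filter_filter, mem_univ, true_and, mem_image, mem_Iio]
    constructor
    · rintro ⟨h1, h2⟩; exact ⟨p.1, h2 ▸ h1, by rw [h2]⟩
    · rintro ⟨i, hi, rfl⟩; exact ⟨hi, rfl⟩
  rw [this, Finset.card_image_of_injective _ (fun a b h => (Prod.mk.injEq _ _ _ _).mp h |>.1),
    Fin.card_Iio]
lemma sum_Pr_apply {n : ℕ} (S : Finset (Fin n × Fin n)) (k : Fin n) :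
    (∑ p ∈ S, Pr p) k
      = #(S.filter fun p => k = p.1) - #(S.filter fun p => k = p.2) := by
  rw [Finset.sum_apply]
  simp only [Pr_apply]
  rw [Finset.sum_sub_distrib, Finset.sum_boole, Finset.sum_boole]
lemma rho_apply {n : ℕ} (k : Fin n) :
    rho n k = ((n : ℚ) - 1 - 2 * k.val) / 2 := by
  have hk : (k.val : ℕ) < n := k.isLt
  have h1 : 1 ≤ n := Nat.one_le_of_lt (Nat.lt_of_le_of_lt (Nat.zero_le _) hk)
  rw [rho, Pi.smul_apply, sum_PosRoots, sum_Pr_apply, card_filter_lt_fst, card_filter_lt_snd]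
  have : ((n - 1 - k.val : ℕ) : ℚ) = (n : ℚ) - 1 - k.val := by
    have : k.val ≤ n - 1 := by omega
    push_cast [Nat.cast_sub this, Nat.cast_sub h1]
    ring
  rw [this, smul_eq_mul]; ring
lemma rho_sub {n : ℕ} (a b : Fin n) :
    rho n a - rho n b = (b.val : ℚ) - (a.val : ℚ) := by
  rw [rho_apply, rho_apply]; ring
lemma wAct_add {n : ℕ} (u : Equiv.Perm (Fin n)) (x y : Fin n → ℚ) :
    wAct u (x + y) = wAct u x + wAct u y := rfl
lemma wAct_sub {n : ℕ} (u : Equiv.Perm (Fin n)) (x y : Fin n → ℚ) :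
    wAct u (x - y) = wAct u x - wAct u y := rfl
lemma wAct_mul {n : ℕ} (a b : Equiv.Perm (Fin n)) (x : Fin n → ℚ) :
    wAct (a * b) x = wAct a (wAct b x) := by
  funext i; simp [wAct, mul_inv_rev, Equiv.Perm.mul_apply]
lemma wAct_sum {n : ℕ} (u : Equiv.Perm (Fin n)) {ι : Type*} (S : Finset ι) (g : ι → Fin n → ℚ) :
    wAct u (∑ p ∈ S, g p) = ∑ p ∈ S, wAct u (g p) := by
  funext i; simp [wAct, Finset.sum_apply]
lemma wAct_Pr {n : ℕ} (u : Equiv.Perm (Fin n)) (p : Fin n × Fin n) :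
    wAct u (Pr p) = Pr (u p.1, u p.2) := by
  funext k
  simp only [wAct, Pr_apply, Equiv.Perm.inv_eq_iff_eq]
def dotp {n : ℕ} (v w : Fin n → ℚ) : ℚ := ∑ k, v k * w k
lemma dotp_wAct {n : ℕ} (u : Equiv.Perm (Fin n)) (x y : Fin n → ℚ) :
    dotp (wAct u x) (wAct u y) = dotp x y := by
  simpa [dotp, wAct] using Equiv.sum_comp (u⁻¹ : Equiv.Perm (Fin n)) (fun m => x m * y m)
lemma card_filter_lt' {n : ℕ} (m : Fin n) :
    #((Finset.univ : Finset (Fin n)).filter fun j => j < m) = m.val := by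
  have : ((Finset.univ : Finset (Fin n)).filter fun j => j < m) = Finset.Iio m := by
    ext j; simp [Finset.mem_Iio]
  rw [this, Fin.card_Iio]
lemma filter_uinv_lt {n : ℕ} (u : Equiv.Perm (Fin n)) (m : Fin n) :
    ((Finset.univ : Finset (Fin n)).filter fun j => u⁻¹ j < m) = (Finset.Iio m).image u := by
  ext j
  simp only [mem_filter, mem_univ, true_and, mem_image, mem_Iio]
  constructor
  · intro h; exact ⟨u⁻¹ j, h, by simp⟩
  · rintro ⟨x, hx, rfl⟩; simpa using hx
lemma card_filter_uinv_lt {n : ℕ} (u : Equiv.Perm (Fin n)) (m : Fin n) :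
    ((Finset.univ : Finset (Fin n)).filter fun j => u⁻¹ j < m).card = m.val := by
  rw [filter_uinv_lt, Finset.card_image_of_injective _ u.injective, Fin.card_Iio]
def invSet {n : ℕ} (u : Equiv.Perm (Fin n)) : Finset (Fin n × Fin n) :=
  (Pairs n).filter fun p => u⁻¹ p.2 < u⁻¹ p.1
lemma invSet_subset {n : ℕ} (u : Equiv.Perm (Fin n)) : invSet u ⊆ Pairs n :=
  Finset.filter_subset _ _
lemma rho_inv {n : ℕ} (u : Equiv.Perm (Fin n)) :
    rho n - wAct u (rho n) = ∑ p ∈ invSet u, Pr p := by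
  funext k
  set m := u⁻¹ k with hm
  have lhs : (rho n - wAct u (rho n)) k = (m.val : ℚ) - (k.val : ℚ) := by
    simp only [Pi.sub_apply, wAct, ← hm, rho_sub]
  rw [lhs, sum_Pr_apply]
  -- identify the two filtered sets with index sets
  have hA : ((invSet u).filter fun p => k = p.1)
      = ((Finset.univ : Finset (Fin n)).filter fun j => k < j ∧ u⁻¹ j < m).image (fun j => (k, j)) := by
    ext p
    simp only [invSet, Pairs, Finset.mem_filter, Finset.filter_filter, Finset.mem_univ, true_and,
      Finset.mem_image]
    constructor
    · rintro ⟨⟨h1, h2⟩, h3⟩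
      exact ⟨p.2, ⟨by rw [h3]; exact h1, by rw [hm, h3]; exact h2⟩, by rw [h3]⟩
    · rintro ⟨j, ⟨hj1, hj2⟩, rfl⟩; exact ⟨⟨hj1, hm ▸ hj2⟩, rfl⟩
  have hB : ((invSet u).filter fun p => k = p.2)
      = ((Finset.univ : Finset (Fin n)).filter fun i => i < k ∧ m < u⁻¹ i).image (fun i => (i, k)) := by
    ext p
    simp only [invSet, Pairs, Finset.mem_filter, Finset.filter_filter, Finset.mem_univ, true_and,
      Finset.mem_image]
    constructor
    · rintro ⟨⟨h1, h2⟩, h3⟩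
      exact ⟨p.1, ⟨by rw [h3]; exact h1, by rw [hm, h3]; exact h2⟩, by rw [h3]⟩
    · rintro ⟨i, ⟨hi1, hi2⟩, rfl⟩; exact ⟨⟨hi1, hm ▸ hi2⟩, rfl⟩
  rw [hA, hB,
    Finset.card_image_of_injective _ (fun a b h => (Prod.mk.injEq _ _ _ _).mp h |>.2),
    Finset.card_image_of_injective _ (fun a b h => (Prod.mk.injEq _ _ _ _).mp h |>.1)]
  -- counting
  set A := ((Finset.univ : Finset (Fin n)).filter fun j => k < j ∧ u⁻¹ j < m) with hAdef
  set B := ((Finset.univ : Finset (Fin n)).filter fun i => i < k ∧ m < u⁻¹ i) with hBdef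
  set C := ((Finset.univ : Finset (Fin n)).filter fun j => j < k ∧ u⁻¹ j < m) with hCdef
  have e1 : ((Finset.univ : Finset (Fin n)).filter fun j => u⁻¹ j < m) = A ∪ C := by
    ext j
    simp only [hAdef, hCdef, Finset.mem_union, Finset.mem_filter, Finset.mem_univ, true_and]
    constructor
    · intro h
      have hjk : j ≠ k := by
        intro hjk; rw [hjk, ← hm] at h; exact lt_irrefl _ h
      rcases lt_or_gt_of_ne hjk with h' | h'
      · exact Or.inr ⟨h', h⟩
      · exact Or.inl ⟨h', h⟩
    · rintro (⟨_, h⟩ | ⟨_, h⟩) <;> exact h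
  have d1 : Disjoint A C := by
    rw [Finset.disjoint_left]
    intro j hj1 hj2
    simp only [hAdef, hCdef, Finset.mem_filter, Finset.mem_univ, true_and] at hj1 hj2
    exact absurd (hj1.1.trans hj2.1) (lt_irrefl _)
  have e2 : ((Finset.univ : Finset (Fin n)).filter fun j => j < k) = C ∪ B := by
    ext i
    simp only [hBdef, hCdef, Finset.mem_union, Finset.mem_filter, Finset.mem_univ, true_and]
    constructor
    · intro h
      have him : u⁻¹ i ≠ m := by
        intro he; rw [hm] at he
        exact absurd ((Equiv.injective _) he ▸ h) (lt_irrefl k)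
      rcases lt_or_gt_of_ne him with h' | h'
      · exact Or.inl ⟨h, h'⟩
      · exact Or.inr ⟨h, h'⟩
    · rintro (⟨h, _⟩ | ⟨h, _⟩) <;> exact h
  have d2 : Disjoint C B := by
    rw [Finset.disjoint_left]
    intro j hj1 hj2
    simp only [hBdef, hCdef, Finset.mem_filter, Finset.mem_univ, true_and] at hj1 hj2
    exact absurd (hj1.2.trans hj2.2) (lt_irrefl _)
  have c1 : #A + #C = m.val := by
    rw [← Finset.card_union_of_disjoint d1, ← e1, card_filter_uinv_lt]
  have c2 : #C + #B = k.val := by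
    rw [← Finset.card_union_of_disjoint d2, ← e2, card_filter_lt']
  have q1 := congrArg (fun t : ℕ => (t : ℚ)) c1
  have q2 := congrArg (fun t : ℕ => (t : ℚ)) c2
  push_cast at q1 q2
  linarith
lemma tri (A : Finset ℕ) (h : ∀ x ∈ A, 1 ≤ x) : #A * (#A + 1) ≤ 2 * ∑ x ∈ A, x := by
  induction A using Finset.strongInduction with
  | _ A ih =>
    rcases A.eq_empty_or_nonempty with rfl | hne
    · simp
    · set M := A.max' hne with hMdef
      have hMmem : M ∈ A := A.max'_mem hne
      have hsub : A ⊆ Finset.Icc 1 M := by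
        intro x hx
        exact Finset.mem_Icc.mpr ⟨h x hx, A.le_max' x hx⟩
      have hcard : #A ≤ M := by
        calc #A ≤ #(Finset.Icc 1 M) := Finset.card_le_card hsub
        _ = M := by rw [Nat.card_Icc]; omega
      have hsum : ∑ x ∈ A, x = M + ∑ x ∈ A.erase M, x :=
        (Finset.add_sum_erase A id hMmem).symm
      have hih := ih (A.erase M) (Finset.erase_ssubset hMmem)
        (fun x hx => h x (Finset.mem_of_mem_erase hx))
      have hce : #(A.erase M) = #A - 1 := Finset.card_erase_of_mem hMmem
      rw [hce] at hih
      have hpos : 1 ≤ #A := Finset.card_pos.mpr hne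
      rw [hsum]
      obtain ⟨c', hc⟩ : ∃ c', #A = c' + 1 := ⟨#A - 1, by omega⟩
      rw [hc] at hih ⊢
      simp only [Nat.add_sub_cancel] at hih
      calc (c' + 1) * (c' + 1 + 1) = c' * (c' + 1) + 2 * (c' + 1) := by ring
      _ ≤ 2 * ∑ x ∈ A.erase M, x + 2 * M := by
          have : c' + 1 ≤ M := hc ▸ hcard
          omega
      _ = 2 * (M + ∑ x ∈ A.erase M, x) := by ring
lemma dotp_sum {n : ℕ} {ι : Type*} (v : Fin n → ℚ) (S : Finset ι) (g : ι → Fin n → ℚ) :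
    dotp v (∑ p ∈ S, g p) = ∑ p ∈ S, dotp v (g p) := by
  simp only [dotp, Finset.sum_apply, Finset.mul_sum]
  exact Finset.sum_comm
lemma dotp_Pr {n : ℕ} (v : Fin n → ℚ) (p : Fin n × Fin n) :
    dotp v (Pr p) = v p.1 - v p.2 := by
  simp [dotp, Pr_apply, mul_sub, mul_ite, mul_one, mul_zero, Finset.sum_sub_distrib,
    Finset.sum_ite_eq']
lemma core {n : ℕ} (T : Finset (Fin n × Fin n)) (hT : T ⊆ Pairs n)
    (mu : Fin n → ℚ)
    (hsep : ∀ a b : Fin n, a < b → 2 * ((b.val : ℚ) - a.val) ≤ mu a - mu b)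
    (heq : 2 * dotp mu (∑ p ∈ T, Pr p) = dotp (∑ p ∈ T, Pr p) (∑ p ∈ T, Pr p)) :
    T = ∅ := by
  have hlt : ∀ p ∈ T, p.1 < p.2 := by
    intro p hp
    have := hT hp
    simpa [Pairs] using this
  set r := ∑ p ∈ T, Pr p with hr
  set D : ℕ := ∑ p ∈ T, (p.2.val - p.1.val) with hD
  have hDq : (D : ℚ) = ∑ p ∈ T, ((p.2.val : ℚ) - p.1.val) := by
    rw [hD, Nat.cast_sum]
    refine Finset.sum_congr rfl fun p hp => ?_
    have h2 : p.1.val ≤ p.2.val := le_of_lt (hlt p hp)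
    push_cast [Nat.cast_sub h2]
    ring
  -- lower bound
  have hmu : 2 * (D : ℚ) ≤ dotp mu r := by
    calc 2 * (D : ℚ) = ∑ p ∈ T, 2 * ((p.2.val : ℚ) - p.1.val) := by
          rw [hDq, Finset.mul_sum]
    _ ≤ ∑ p ∈ T, (mu p.1 - mu p.2) :=
          Finset.sum_le_sum fun p hp => hsep _ _ (hlt p hp)
    _ = ∑ p ∈ T, dotp mu (Pr p) := by simp [dotp_Pr]
    _ = dotp mu r := (dotp_sum mu T Pr).symm
  -- out/in degrees
  set out : Fin n → ℕ := fun k => #(T.filter fun p => p.1 = k) with hout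
  set inn : Fin n → ℕ := fun k => #(T.filter fun p => p.2 = k) with hinn
  have hrk : ∀ k, r k = (out k : ℚ) - inn k := by
    intro k
    rw [hr, sum_Pr_apply]
    congr 2 <;> [rw [hout]; rw [hinn]] <;> congr 1 <;> exact Finset.filter_congr
      (by intro p hp; exact ⟨fun h => h.symm, fun h => h.symm⟩)
  -- fiberwise sums
  have hfib1 : ∑ k, ∑ p ∈ T.filter (fun p => p.1 = k), (p.2.val - p.1.val) = D :=
    Finset.sum_fiberwise_of_maps_to (fun x _ => Finset.mem_univ _) _
  have hfib2 : ∑ k, ∑ p ∈ T.filter (fun p => p.2 = k), (p.2.val - p.1.val) = D :=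
    Finset.sum_fiberwise_of_maps_to (fun x _ => Finset.mem_univ _) _
  have hcT1 : #T = ∑ k, out k := Finset.card_eq_sum_card_fiberwise (fun x _ => Finset.mem_univ _)
  have hcT2 : #T = ∑ k, inn k := Finset.card_eq_sum_card_fiberwise (fun x _ => Finset.mem_univ _)
  -- per-fiber triangular bounds
  have per1 : ∀ k, out k * (out k + 1) ≤ 2 * ∑ p ∈ T.filter (fun p => p.1 = k), (p.2.val - p.1.val) := by
    intro k
    set Tk := T.filter fun p => p.1 = k with hTk
    have hinj : Set.InjOn (fun p : Fin n × Fin n => p.2.val - p.1.val) Tk := by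
      intro p hp q hq hpq
      simp only [hTk, Finset.coe_filter, Set.mem_setOf_eq] at hp hq
      have hp2 := hlt p hp.1; have hq2 := hlt q hq.1
      have e1 : p.1 = k := hp.2; have e2 : q.1 = k := hq.2
      have : p.2 = q.2 := by
        apply Fin.ext
        have v1 := congrArg Fin.val e1
        have v2 := congrArg Fin.val e2
        have w1 : p.1.val < p.2.val := hp2
        have w2 : q.1.val < q.2.val := hq2
        simp only at hpq
        omega
      exact Prod.ext (e1.trans e2.symm) this
    have himg : #(Tk.image fun p => p.2.val - p.1.val) = out k := by
      rw [Finset.card_image_of_injOn hinj]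
    have hone : ∀ x ∈ Tk.image fun p => p.2.val - p.1.val, 1 ≤ x := by
      intro x hx
      obtain ⟨p, hp, rfl⟩ := Finset.mem_image.mp hx
      have := hlt p (Finset.mem_of_mem_filter p hp)
      omega
    have := tri _ hone
    rw [himg, Finset.sum_image hinj] at this
    exact this
  have per2 : ∀ k, inn k * (inn k + 1) ≤ 2 * ∑ p ∈ T.filter (fun p => p.2 = k), (p.2.val - p.1.val) := by
    intro k
    set Tk := T.filter fun p => p.2 = k with hTk
    have hinj : Set.InjOn (fun p : Fin n × Fin n => p.2.val - p.1.val) Tk := by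
      intro p hp q hq hpq
      simp only [hTk, Finset.coe_filter, Set.mem_setOf_eq] at hp hq
      have hp2 := hlt p hp.1; have hq2 := hlt q hq.1
      have e1 : p.2 = k := hp.2; have e2 : q.2 = k := hq.2
      have : p.1 = q.1 := by
        apply Fin.ext
        have v1 := congrArg Fin.val e1
        have v2 := congrArg Fin.val e2
        have w1 : p.1.val < p.2.val := hp2
        have w2 : q.1.val < q.2.val := hq2
        simp only at hpq
        omega
      exact Prod.ext this (e1.trans e2.symm)
    have himg : #(Tk.image fun p => p.2.val - p.1.val) = inn k := by
      rw [Finset.card_image_of_injOn hinj]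
    have hone : ∀ x ∈ Tk.image fun p => p.2.val - p.1.val, 1 ≤ x := by
      intro x hx
      obtain ⟨p, hp, rfl⟩ := Finset.mem_image.mp hx
      have := hlt p (Finset.mem_of_mem_filter p hp)
      omega
    have := tri _ hone
    rw [himg, Finset.sum_image hinj] at this
    exact this
  -- summed bounds in ℕ
  have N1 : (∑ k, out k * out k) + #T ≤ 2 * D := by
    have : ∑ k, out k * (out k + 1) ≤ 2 * D := by
      calc ∑ k, out k * (out k + 1)
          ≤ ∑ k, 2 * ∑ p ∈ T.filter (fun p => p.1 = k), (p.2.val - p.1.val) :=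
            Finset.sum_le_sum fun k _ => per1 k
      _ = 2 * D := by rw [← Finset.mul_sum, hfib1]
    calc (∑ k, out k * out k) + #T = ∑ k, out k * (out k + 1) := by
          rw [hcT1, ← Finset.sum_add_distrib]
          exact Finset.sum_congr rfl fun k _ => by ring
    _ ≤ 2 * D := this
  have N2 : (∑ k, inn k * inn k) + #T ≤ 2 * D := by
    have : ∑ k, inn k * (inn k + 1) ≤ 2 * D := by
      calc ∑ k, inn k * (inn k + 1)
          ≤ ∑ k, 2 * ∑ p ∈ T.filter (fun p => p.2 = k), (p.2.val - p.1.val) :=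
            Finset.sum_le_sum fun k _ => per2 k
      _ = 2 * D := by rw [← Finset.mul_sum, hfib2]
    calc (∑ k, inn k * inn k) + #T = ∑ k, inn k * (inn k + 1) := by
          rw [hcT2, ← Finset.sum_add_distrib]
          exact Finset.sum_congr rfl fun k _ => by ring
    _ ≤ 2 * D := this
  -- upper bound for dotp r r
  have hub : dotp r r ≤ 4 * (D : ℚ) - 2 * #T := by
    have step1 : dotp r r ≤ ((∑ k, out k * out k : ℕ) : ℚ) + ((∑ k, inn k * inn k : ℕ) : ℚ) := by
      rw [dotp, Nat.cast_sum, Nat.cast_sum, ← Finset.sum_add_distrib]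
      refine Finset.sum_le_sum fun k _ => ?_
      rw [hrk k]
      push_cast
      have h1 : (0 : ℚ) ≤ out k := Nat.cast_nonneg _
      have h2 : (0 : ℚ) ≤ inn k := Nat.cast_nonneg _
      nlinarith [mul_nonneg h1 h2]
    have c1 : ((∑ k, out k * out k : ℕ) : ℚ) ≤ 2 * D - #T := by
      have := N1
      have : ((∑ k, out k * out k) + #T : ℕ) ≤ ((2 * D : ℕ) : ℚ) := by exact_mod_cast this
      push_cast at this ⊢
      linarith
    have c2 : ((∑ k, inn k * inn k : ℕ) : ℚ) ≤ 2 * D - #T := by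
      have := N2
      have : ((∑ k, inn k * inn k) + #T : ℕ) ≤ ((2 * D : ℕ) : ℚ) := by exact_mod_cast this
      push_cast at this ⊢
      linarith
    linarith
  -- conclude
  have : (#T : ℚ) ≤ 0 := by linarith [heq, hmu, hub]
  have : #T = 0 := by exact_mod_cast le_antisymm (by exact_mod_cast this) (Nat.zero_le _)
  exact Finset.card_eq_zero.mp this
lemma Pr_neg {n : ℕ} (a b : Fin n) : Pr (a, b) = -Pr (b, a) := by
  funext k; simp only [Pr_apply, Pi.neg_apply]; ring
lemma dotp_sub_sub {n : ℕ} (x y : Fin n → ℚ) :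
    dotp (x - y) (x - y) = dotp x x - 2 * dotp x y + dotp y y := by
  have h : ∀ k : Fin n, (x k - y k) * (x k - y k)
      = x k * x k - 2 * (x k * y k) + y k * y k := fun k => by ring
  simp only [dotp, Pi.sub_apply]
  rw [Finset.sum_congr rfl fun k _ => h k, Finset.sum_add_distrib, Finset.sum_sub_distrib,
    ← Finset.mul_sum]
lemma wAct_one {n : ℕ} (x : Fin n → ℚ) : wAct 1 x = x := rfl
lemma lam_gap {n : ℕ} (lam : Fin n → ℚ) (hdom : Dominant lam) (hreg : Regular lam) :
    ∀ a b : Fin n, a < b → (b.val : ℚ) - a.val ≤ lam a - lam b := by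
  have cons : ∀ i j : Fin n, (i : ℕ) + 1 = (j : ℕ) → 1 ≤ lam i - lam j := by
    intro i j hij
    have hne : i ≠ j := by
      intro h
      have : (i : ℕ) = (j : ℕ) := congrArg Fin.val h
      omega
    obtain ⟨m, hm0, hm⟩ := hreg i j hne
    have h0 := hdom.2 i j hij
    rw [hm] at h0 ⊢
    have hz : (0 : ℤ) ≤ m := by exact_mod_cast h0
    have : (1 : ℤ) ≤ m := by omega
    exact_mod_cast this
  have key : ∀ d : ℕ, ∀ a b : Fin n, b.val = a.val + d + 1 →
      (b.val : ℚ) - a.val ≤ lam a - lam b := by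
    intro d
    induction d with
    | zero =>
      intro a b hb
      have h1 := cons a b (by omega)
      have hc : (b.val : ℚ) = (a.val : ℚ) + 1 := by
        rw [hb]; push_cast; ring
      linarith
    | succ d ih =>
      intro a b hb
      have hcn : a.val + d + 1 < n := by
        have := b.isLt; omega
      have h1 := ih a ⟨a.val + d + 1, hcn⟩ rfl
      have h2 := cons ⟨a.val + d + 1, hcn⟩ b (by simp only; omega)
      have hcv : ((⟨a.val + d + 1, hcn⟩ : Fin n).val : ℚ) = (a.val : ℚ) + d + 1 := by
        simp only; push_cast; ring
      have hbv : (b.val : ℚ) = (a.val : ℚ) + d + 2 := by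
        rw [hb]; push_cast; ring
      rw [hcv] at h1
      linarith
  intro a b hab
  have hv : a.val < b.val := hab
  exact key (b.val - a.val - 1) a b (by omega)
lemma mu_sep {n : ℕ} (lam : Fin n → ℚ) (hdom : Dominant lam) (hreg : Regular lam) :
    ∀ a b : Fin n, a < b → 2 * ((b.val : ℚ) - a.val) ≤ (lam + rho n) a - (lam + rho n) b := by
  intro a b hab
  have h1 := lam_gap lam hdom hreg a b hab
  have h2 := rho_sub a b
  simp only [Pi.add_apply]
  linarith

/-- Lemma 3(i), second equality: for dominant regular `lam` and `w` in `S_n`,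
the intersection of `{w lam} - P` with the dot-orbit is exactly `{w·lam}`. -/
theorem lemma3_i_second {n : ℕ} (hn : 1 ≤ n) (lam : Fin n → ℚ)
    (hdom : Dominant lam) (hreg : Regular lam) (w : Equiv.Perm (Fin n)) :
    {v : Fin n → ℚ | ∃ I ⊆ PosRoots n, v = wAct w lam - ∑ α ∈ I, α} ∩
      {v : Fin n → ℚ | ∃ w' : Equiv.Perm (Fin n), v = dotAct w' lam} =
    {dotAct w lam} := by
  have hPR : PosRoots n = (Pairs n).image Pr := rfl
  ext v
  simp only [Set.mem_inter_iff, Set.mem_setOf_eq, Set.mem_singleton_iff]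
  constructor
  · rintro ⟨⟨I, hI, hv1⟩, w', hv2⟩
    set S := (Pairs n).filter (fun p => Pr p ∈ I) with hS
    have hSsub : S ⊆ Pairs n := Finset.filter_subset _ _
    have hIS : I = S.image Pr := by
      ext α
      simp only [hS, Finset.mem_image, Finset.mem_filter]
      constructor
      · intro hα
        obtain ⟨p, hp, rfl⟩ := Finset.mem_image.mp (hPR ▸ hI hα)
        exact ⟨p, ⟨hp, hα⟩, rfl⟩
      · rintro ⟨p, ⟨hp, hpI⟩, rfl⟩; exact hpI
    have hSsum : ∑ α ∈ I, α = ∑ p ∈ S, Pr p := by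
      rw [hIS]
      exact Finset.sum_image fun x hx y hy h => Pr_injOn (hSsub hx) (hSsub hy) h
    set μ := lam + rho n with hmu
    have h0 : wAct w' μ - rho n = wAct w lam - ∑ p ∈ S, Pr p := by
      rw [← hSsum]
      exact hv2.symm.trans hv1
    have heqn : wAct w' μ = wAct w lam - ∑ p ∈ S, Pr p + rho n :=
      sub_eq_iff_eq_add.mp h0
    -- transported sets
    have ginj : Function.Injective (fun p : Fin n × Fin n => ((w⁻¹ p.1 : Fin n), w⁻¹ p.2)) := by
      intro p q h
      obtain ⟨h1, h2⟩ := Prod.mk.injEq _ _ _ _ ▸ h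
      exact Prod.ext (w⁻¹.injective h1) (w⁻¹.injective h2)
    have ginj' : Function.Injective (fun p : Fin n × Fin n => ((w⁻¹ p.2 : Fin n), w⁻¹ p.1)) := by
      intro p q h
      obtain ⟨h1, h2⟩ := Prod.mk.injEq _ _ _ _ ▸ h
      exact Prod.ext (w⁻¹.injective h2) (w⁻¹.injective h1)
    set SA := S.filter (fun p => w⁻¹ p.1 < w⁻¹ p.2) with hSA
    set SB := S.filter (fun p => ¬ w⁻¹ p.1 < w⁻¹ p.2) with hSB
    set Aset := SA.image (fun p => ((w⁻¹ p.1 : Fin n), w⁻¹ p.2)) with hAset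
    set Bset := SB.image (fun p => ((w⁻¹ p.2 : Fin n), w⁻¹ p.1)) with hBset
    have hSlt : ∀ p ∈ S, p.1 < p.2 := by
      intro p hp
      have := hSsub hp
      simpa [Pairs] using this
    have hBinv : Bset ⊆ invSet w⁻¹ := by
      intro q hq
      obtain ⟨p, hp, rfl⟩ := Finset.mem_image.mp hq
      simp only [hSB, Finset.mem_filter] at hp
      obtain ⟨hpS, hplt⟩ := hp
      have hne : w⁻¹ p.1 ≠ w⁻¹ p.2 := by
        intro h
        have h' : p.1 = p.2 := w⁻¹.injective h
        have hlt := hSlt p hpS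
        rw [h'] at hlt
        exact lt_irrefl _ hlt
      have hgt : w⁻¹ p.2 < w⁻¹ p.1 := by
        rcases lt_or_gt_of_ne hne with h | h
        · exact absurd h hplt
        · exact h
      simp only [invSet, Pairs, Finset.mem_filter, Finset.mem_univ, true_and, inv_inv,
        Equiv.Perm.inv_def, Equiv.symm_symm, Equiv.apply_symm_apply]
      exact ⟨hgt, hSlt p hpS⟩
    have hApairs : Aset ⊆ Pairs n := by
      intro q hq
      obtain ⟨p, hp, rfl⟩ := Finset.mem_image.mp hq
      simp only [hSA, Finset.mem_filter] at hp
      simp only [Pairs, Finset.mem_filter, Finset.mem_univ, true_and]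
      exact hp.2
    have hdisj : Disjoint (invSet w⁻¹ \ Bset) Aset := by
      rw [Finset.disjoint_right]
      intro q hq hq2
      obtain ⟨p, hp, rfl⟩ := Finset.mem_image.mp hq
      simp only [hSA, Finset.mem_filter] at hp
      have := Finset.mem_sdiff.mp hq2
      have hinv := this.1
      simp only [invSet, Finset.mem_filter, inv_inv, Equiv.Perm.inv_def, Equiv.symm_symm, Equiv.apply_symm_apply] at hinv
      exact absurd (hinv.2.trans (hSlt p hp.1)) (lt_irrefl _)
    set T := (invSet w⁻¹ \ Bset) ∪ Aset with hT
    have hTpairs : T ⊆ Pairs n := by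
      intro q hq
      rcases Finset.mem_union.mp hq with h | h
      · exact invSet_subset w⁻¹ (Finset.mem_sdiff.mp h).1
      · exact hApairs h
    -- sum over T
    have hsumT : ∑ q ∈ T, Pr q
        = ∑ q ∈ invSet w⁻¹, Pr q - ∑ q ∈ Bset, Pr q + ∑ q ∈ Aset, Pr q := by
      rw [hT, Finset.sum_union hdisj, Finset.sum_sdiff_eq_sub hBinv]
    -- transport of the S-sum
    have htrans : wAct w⁻¹ (∑ p ∈ S, Pr p)
        = ∑ q ∈ Aset, Pr q - ∑ q ∈ Bset, Pr q := by
      rw [wAct_sum]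
      rw [← Finset.sum_filter_add_sum_filter_not S (fun p => w⁻¹ p.1 < w⁻¹ p.2), ← hSA, ← hSB]
      have e1 : ∑ p ∈ SA, wAct w⁻¹ (Pr p) = ∑ q ∈ Aset, Pr q := by
        rw [hAset, Finset.sum_image (fun x _ y _ h => ginj h)]
        refine Finset.sum_congr rfl fun p _ => ?_
        rw [wAct_Pr]
      have e2 : ∑ p ∈ SB, wAct w⁻¹ (Pr p) = - ∑ q ∈ Bset, Pr q := by
        rw [hBset, Finset.sum_image (fun x _ y _ h => ginj' h), ← Finset.sum_neg_distrib]
        refine Finset.sum_congr rfl fun p _ => ?_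
        rw [wAct_Pr, ← Pr_neg]
      rw [e1, e2]
      abel
    -- the key equation
    set u := w⁻¹ * w' with hu
    have hkey : wAct u μ = μ - ∑ q ∈ T, Pr q := by
      have step := congrArg (wAct w⁻¹) heqn
      rw [← wAct_mul] at step
      have expand : wAct w⁻¹ (wAct w lam - ∑ p ∈ S, Pr p + rho n)
          = wAct w⁻¹ (wAct w lam) - wAct w⁻¹ (∑ p ∈ S, Pr p) + wAct w⁻¹ (rho n) := rfl
      rw [expand, ← wAct_mul, inv_mul_cancel, wAct_one, htrans] at step
      rw [hu, step, hsumT, hmu]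
      have hri := rho_inv w⁻¹
      have : wAct w⁻¹ (rho n) = rho n - ∑ p ∈ invSet w⁻¹, Pr p := by
        rw [← hri]; abel
      rw [this]
      abel
    -- norm argument
    have hnorm : dotp (wAct u μ) (wAct u μ) = dotp μ μ := dotp_wAct u μ μ
    rw [hkey, dotp_sub_sub] at hnorm
    have hquad : 2 * dotp μ (∑ q ∈ T, Pr q) = dotp (∑ q ∈ T, Pr q) (∑ q ∈ T, Pr q) := by
      linarith
    have hTempty : T = ∅ := core T hTpairs μ (mu_sep lam hdom hreg) hquad
    have hfix : wAct u μ = μ := by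
      rw [hkey, hTempty]
      simp
    have hww : wAct w' μ = wAct w μ := by
      have : w * u = w' := by rw [hu]; group
      rw [← this, wAct_mul, hfix]
    rw [hv2, dotAct, ← hmu, hww, dotAct, ← hmu]
  · rintro rfl
    constructor
    · refine ⟨(invSet w).image Pr, ?_, ?_⟩
      · rw [hPR]
        exact Finset.image_subset_image (invSet_subset w)
      · have hsum : ∑ α ∈ (invSet w).image Pr, α = ∑ p ∈ invSet w, Pr p :=
          Finset.sum_image fun x hx y hy h =>
            Pr_injOn (invSet_subset w hx) (invSet_subset w hy) h
        rw [hsum, ← rho_inv w, dotAct, wAct_add]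
        abel
    · exact ⟨w, rfl⟩
end
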